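/- In the generic-coding construction, for every x : Set ℕ and every i : ℕ, the string c (i+1) belongs to D i and is an initial segment of x̃; consequently x̃ meets every D i (i.e., x̃ is generic for the family D). -/

import Mathlib

open scoped Classical

/-- `s` is an initial segment of `g : ℕ → Bool`: the finite partial function given by `s`
agrees with `g` on its domain. -/
def InitSeg (s : List Bool) (g : ℕ → Bool) : Prop :=
  ∀ k, (h : k < s.length) → s.get ⟨k, h⟩ = g k

/-- A set of binary strings is dense if every string has an extension in it,
where `s` extends `t` iff `t` is a prefix of `s`. -/
def DenseStrings (D : Set (List Bool)) : Prop :=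
  ∀ t : List Bool, ∃ s ∈ D, t <+: s

/-- `s` properly extends `t`: `t` is a proper prefix of `s`. -/
def ProperExt (s t : List Bool) : Prop := t <+: s ∧ t ≠ s

/-- Two strings are incompatible if neither is a prefix of the other. -/
def Incompat (s t : List Bool) : Prop := ¬s <+: t ∧ ¬t <+: s

/-- The minimal element of a set of strings: the one of least code under the canonical
(`Encodable`) encoding of `List Bool` into `ℕ` (junk value `[]` if the set is empty). -/
noncomputable def minString (S : Set (List Bool)) : List Bool :=
  ((Encodable.decode (sInf (Encodable.encode '' S)) : Option (List Bool))).getD []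

/-- The recursively defined sequence of conditions `c i` coding `x` along the dense family `D`:
`c 0 = []`; `e i` is the minimal element of `D i` properly extending `c i`;
`c (i+1) = e i` if `i ∈ x`, and otherwise `c (i+1)` is the minimal element of `D i`
properly extending `c i` and incompatible with `e i`. -/
noncomputable def cSeq (D : ℕ → Set (List Bool)) (x : Set ℕ) : ℕ → List Bool
  | 0 => []
  | i + 1 =>
    let ci := cSeq D x i
    let ei := minString {s ∈ D i | ProperExt s ci}
    if i ∈ x then ei
    else minString {s ∈ D i | ProperExt s ci ∧ Incompat s ei}

/-- `e i`: the minimal element of `D i` properly extending `c i`. -/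
noncomputable def eSeq (D : ℕ → Set (List Bool)) (x : Set ℕ) (i : ℕ) : List Bool :=
  minString {s ∈ D i | ProperExt s (cSeq D x i)}

/-- `x̃`: the unique function having every `c i` as an initial segment (when each `D i` is
dense, `c (i+1)` properly extends `c i`, so `c (k+1)` has length `> k` and determines bit `k`). -/
noncomputable def tilde (D : ℕ → Set (List Bool)) (x : Set ℕ) : ℕ → Bool :=
  fun k => (cSeq D x (k + 1)).getD k false

lemma minString_mem {S : Set (List Bool)} (hS : S.Nonempty) : minString S ∈ S := by
  have hne : (Encodable.encode '' S : Set ℕ).Nonempty := hS.image _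
  have hmem := Nat.sInf_mem hne
  obtain ⟨t, ht, htn⟩ := hmem
  unfold minString
  rw [← htn, Encodable.encodek]
  simpa using ht

lemma properSet_nonempty {Di : Set (List Bool)} (h : DenseStrings Di) (t : List Bool) :
    {s ∈ Di | ProperExt s t}.Nonempty := by
  obtain ⟨s, hsD, hpre⟩ := h (t ++ [false])
  refine ⟨s, hsD, (t.prefix_append [false]).trans hpre, ?_⟩
  intro he
  have := hpre.length_le
  simp [← he] at this

lemma ne_of_get_ne {s t : List Bool} {n : ℕ} (hs : n < s.length) (ht : n < t.length)
    (h : s[n] ≠ t[n]) : ¬ s <+: t ∧ ¬ t <+: s :=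
  ⟨fun hp => h (hp.getElem hs), fun hp => h (hp.getElem ht).symm⟩

lemma incompatSet_nonempty {Di : Set (List Bool)} (h : DenseStrings Di) {c e : List Bool}
    (he : ProperExt e c) :
    {s ∈ Di | ProperExt s c ∧ Incompat s e}.Nonempty := by
  obtain ⟨u, hu⟩ := he.1
  have hulen : u ≠ [] := by rintro rfl; exact he.2 (by simp [← hu])
  have hclt : c.length < e.length := by
    rw [← hu]; simp [List.length_append]
    cases u with
    | nil => exact absurd rfl hulen
    | cons a l => simp
  set b : Bool := !(e[c.length]'hclt) with hb
  obtain ⟨s, hsD, hpre⟩ := h (c ++ [b])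
  have hslen : c.length < s.length := by
    have := hpre.length_le; simp at this; omega
  have hsb : s[c.length]'hslen = b := by
    have := hpre.getElem (i := c.length) (by simp)
    simpa using this.symm
  refine ⟨s, hsD, ⟨(c.prefix_append [b]).trans hpre, fun hce => by
    rw [← hce] at hslen; omega⟩, ?_⟩
  exact ne_of_get_ne hslen hclt (by rw [hsb, hb]; simp)

lemma cSeq_mem_properExt (D : ℕ → Set (List Bool)) (hD : ∀ i, DenseStrings (D i))
    (x : Set ℕ) (i : ℕ) :
    cSeq D x (i + 1) ∈ D i ∧ ProperExt (cSeq D x (i + 1)) (cSeq D x i) := by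
  simp only [cSeq]
  split
  · have := minString_mem (properSet_nonempty (hD i) (cSeq D x i))
    exact ⟨this.1, this.2⟩
  · have he := minString_mem (properSet_nonempty (hD i) (cSeq D x i))
    have := minString_mem (incompatSet_nonempty (hD i) he.2)
    exact ⟨this.1, this.2.1⟩

lemma cSeq_length (D : ℕ → Set (List Bool)) (hD : ∀ i, DenseStrings (D i))
    (x : Set ℕ) (i : ℕ) : i ≤ (cSeq D x i).length := by
  induction i with
  | zero => exact Nat.zero_le _
  | succ n ih =>
    have h := (cSeq_mem_properExt D hD x n).2
    have hlt : (cSeq D x n).length < (cSeq D x (n + 1)).length :=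
      lt_of_le_of_ne h.1.length_le (fun hl => h.2 (h.1.eq_of_length hl))
    omega

lemma cSeq_prefix (D : ℕ → Set (List Bool)) (hD : ∀ i, DenseStrings (D i))
    (x : Set ℕ) {i j : ℕ} (hij : i ≤ j) : cSeq D x i <+: cSeq D x j := by
  induction j with
  | zero =>
    have : i = 0 := Nat.le_zero.mp hij
    subst this; exact List.prefix_refl _
  | succ n ih =>
    rcases Nat.lt_or_ge i (n + 1) with h | h
    · exact (ih (by omega)).trans (cSeq_mem_properExt D hD x n).2.1
    · have : i = n + 1 := by omega
      subst this; rfl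

lemma cSeq_initSeg (D : ℕ → Set (List Bool)) (hD : ∀ i, DenseStrings (D i))
    (x : Set ℕ) (i : ℕ) : InitSeg (cSeq D x i) (tilde D x) := by
  intro k hk
  have hk1 : k < (cSeq D x (k + 1)).length :=
    lt_of_lt_of_le (Nat.lt_succ_self k) (cSeq_length D hD x (k + 1))
  have htil : tilde D x k = (cSeq D x (k + 1))[k] := by
    unfold tilde
    exact List.getD_eq_getElem _ _ hk1
  rw [htil, List.get_eq_getElem]
  rcases Nat.le_total i (k + 1) with h | h
  · exact (cSeq_prefix D hD x h).getElem hk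
  · exact ((cSeq_prefix D hD x h).getElem hk1).symm

/-- For every `x` and `i`, the condition `c (i+1)` belongs to `D i` and is an initial segment
of `x̃`; consequently `x̃` meets every `D i`, i.e. `x̃` is generic for the family `D`. -/
theorem cSeq_succ_mem_and_initSeg (D : ℕ → Set (List Bool)) (hD : ∀ i, DenseStrings (D i))
    (x : Set ℕ) (i : ℕ) :
    cSeq D x (i + 1) ∈ D i ∧ InitSeg (cSeq D x (i + 1)) (tilde D x) ∧
      ∃ s ∈ D i, InitSeg s (tilde D x) := by
  have hm := cSeq_mem_properExt D hD x i
  exact ⟨hm.1, cSeq_initSeg D hD x (i + 1), cSeq D x (i + 1), hm.1, cSeq_initSeg D hD x (i + 1)⟩
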